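/- Let J be a bounded self-adjoint Jacobi matrix on ℓ²(ℤ) with coefficients (a, b), let S be the shift, and for n ∈ ℕ let (Jⁿ)_+ denote the strictly upper triangular part of Jⁿ (in the standard basis). Then (Jⁿ)_+ = Σ_{k=0}^{n-1} a ((Jᵏ)_d S - (S Jᵏ)_d) J^{n-k-1}, where X_d denotes the diagonal part of X (the multiplication operator by the sequence X_{mm}) and a denotes multiplication by the sequence a. -/

import Mathlib

noncomputable section

/-- ℓ²(ℤ) -/
abbrev H2 : Type := lp (fun _ : ℤ => ℂ) 2

/-- the standard unit vectors δ_n -/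
noncomputable def delta (n : ℤ) : H2 := lp.single 2 n 1

/-- matrix entries X_{jk} = ⟨δ_j, X δ_k⟩ -/
noncomputable def ent (X : H2 →L[ℂ] H2) (j k : ℤ) : ℂ := inner ℂ (delta j) (X (delta k))

open ContinuousLinearMap Finset

lemma inner_delta (j : ℤ) (f : H2) : (inner ℂ (delta j) f : ℂ) = f j := by
  simp [delta, lp.inner_single_left]

lemma delta_apply (n m : ℤ) : (delta n : H2) m = if m = n then 1 else 0 := by
  simp [delta, lp.single_apply, Pi.single_apply]

lemma apply_eq_ent (X : H2 →L[ℂ] H2) (k j : ℤ) : (X (delta k)) j = ent X j k :=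
  (inner_delta j _).symm

lemma apply_delta_eq {X : H2 →L[ℂ] H2} {k : ℤ} {g : H2} (h : ∀ j, ent X j k = g j) :
    X (delta k) = g := by
  apply lp.ext; funext j
  rw [apply_eq_ent, h]

lemma clm_ext {X Y : H2 →L[ℂ] H2} (h : ∀ j k, ent X j k = ent Y j k) : X = Y := by
  have hδ : ∀ k, X (delta k) = Y (delta k) := by
    intro k
    apply apply_delta_eq
    intro j
    rw [h, ← apply_eq_ent]
  refine ContinuousLinearMap.ext fun f => ?_
  have hs : HasSum (fun i : ℤ => lp.single 2 i (f i)) f :=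
    lp.hasSum_single (by norm_num) f
  have hX : HasSum (fun i : ℤ => X (lp.single 2 i (f i))) (X f) := X.hasSum hs
  have hY : HasSum (fun i : ℤ => Y (lp.single 2 i (f i))) (Y f) := Y.hasSum hs
  refine hX.unique ?_
  convert hY using 2 with i
  have h1 : (lp.single 2 i (f i) : H2) = f i • delta i := by
    rw [delta, ← lp.single_smul, smul_eq_mul, mul_one]
  rw [h1, map_smul, map_smul, hδ]

lemma ent_one (j k : ℤ) : ent (1 : H2 →L[ℂ] H2) j k = if j = k then 1 else 0 := by
  rw [ent, ContinuousLinearMap.one_apply, inner_delta, delta_apply]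

lemma ent_add (X Y : H2 →L[ℂ] H2) (j k : ℤ) : ent (X + Y) j k = ent X j k + ent Y j k := by
  simp [ent, inner_add_right]

lemma ent_sub (X Y : H2 →L[ℂ] H2) (j k : ℤ) : ent (X - Y) j k = ent X j k - ent Y j k := by
  simp [ent, inner_sub_right]

lemma ent_zero (j k : ℤ) : ent (0 : H2 →L[ℂ] H2) j k = 0 := by
  simp [ent]

section ops
variable {a b : ℤ → ℝ} {S A Mb J : H2 →L[ℂ] H2}

lemma S_delta (hS : ∀ j k : ℤ, ent S j k = if k = j + 1 then 1 else 0) (k : ℤ) :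
    S (delta k) = delta (k - 1) := by
  apply apply_delta_eq
  intro j
  rw [hS, delta_apply]
  by_cases h : k = j + 1
  · rw [if_pos h, if_pos (by omega)]
  · rw [if_neg h, if_neg (by omega)]

lemma Sadj_delta (hS : ∀ j k : ℤ, ent S j k = if k = j + 1 then 1 else 0) (k : ℤ) :
    (ContinuousLinearMap.adjoint S) (delta k) = delta (k + 1) := by
  apply apply_delta_eq
  intro j
  rw [ent, adjoint_inner_right, S_delta hS, inner_delta, delta_apply, delta_apply]
  by_cases h : j - 1 = k
  · rw [if_pos h, if_pos (by omega)]
  · rw [if_neg h, if_neg (by omega)]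

lemma A_delta (hA : ∀ j k : ℤ, ent A j k = if j = k then (a j : ℂ) else 0) (k : ℤ) :
    A (delta k) = (a k : ℂ) • delta k := by
  apply apply_delta_eq
  intro j
  rw [hA]
  have : ((a k : ℂ) • delta k : H2) j = (a k : ℂ) * (delta k : H2) j := by
    rw [lp.coeFn_smul]; rfl
  rw [this, delta_apply]
  by_cases h : j = k
  · subst h; simp
  · simp [h]

lemma ent_mul_S (hS : ∀ j k : ℤ, ent S j k = if k = j + 1 then 1 else 0)
    (X : H2 →L[ℂ] H2) (j k : ℤ) : ent (X * S) j k = ent X j (k - 1) := by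
  rw [ent, ContinuousLinearMap.mul_apply, S_delta hS]; rfl

lemma ent_mul_Sadj (hS : ∀ j k : ℤ, ent S j k = if k = j + 1 then 1 else 0)
    (X : H2 →L[ℂ] H2) (j k : ℤ) :
    ent (X * ContinuousLinearMap.adjoint S) j k = ent X j (k + 1) := by
  rw [ent, ContinuousLinearMap.mul_apply, Sadj_delta hS]; rfl

lemma ent_mul_A (hA : ∀ j k : ℤ, ent A j k = if j = k then (a j : ℂ) else 0)
    (X : H2 →L[ℂ] H2) (j k : ℤ) : ent (X * A) j k = (a k : ℂ) * ent X j k := by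
  rw [ent, ContinuousLinearMap.mul_apply, A_delta hA, map_smul, inner_smul_right]; rfl

lemma ent_S_mul (hS : ∀ j k : ℤ, ent S j k = if k = j + 1 then 1 else 0)
    (X : H2 →L[ℂ] H2) (j k : ℤ) : ent (S * X) j k = ent X (j + 1) k := by
  rw [ent, ContinuousLinearMap.mul_apply, ← adjoint_inner_left, Sadj_delta hS]; rfl

lemma ent_Sadj_mul (hS : ∀ j k : ℤ, ent S j k = if k = j + 1 then 1 else 0)
    (X : H2 →L[ℂ] H2) (j k : ℤ) :
    ent (ContinuousLinearMap.adjoint S * X) j k = ent X (j - 1) k := by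
  rw [ent, ContinuousLinearMap.mul_apply, adjoint_inner_right, S_delta hS]; rfl

lemma A_selfadj (hA : ∀ j k : ℤ, ent A j k = if j = k then (a j : ℂ) else 0) :
    ContinuousLinearMap.adjoint A = A := by
  apply clm_ext
  intro j k
  rw [ent, adjoint_inner_right, A_delta hA, inner_smul_left, Complex.conj_ofReal,
    inner_delta, delta_apply, hA]
  by_cases h : j = k
  · subst h; simp
  · simp [h]

lemma ent_A_mul (hA : ∀ j k : ℤ, ent A j k = if j = k then (a j : ℂ) else 0)
    (X : H2 →L[ℂ] H2) (j k : ℤ) : ent (A * X) j k = (a j : ℂ) * ent X j k := by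
  rw [ent, ContinuousLinearMap.mul_apply, ← adjoint_inner_left, A_selfadj hA, A_delta hA, inner_smul_left,
    Complex.conj_ofReal]; rfl

lemma ent_mul_Mb (hMb : ∀ j k : ℤ, ent Mb j k = if j = k then (b j : ℂ) else 0)
    (X : H2 →L[ℂ] H2) (j k : ℤ) : ent (X * Mb) j k = (b k : ℂ) * ent X j k := by
  rw [ent, ContinuousLinearMap.mul_apply, A_delta hMb, map_smul, inner_smul_right]; rfl

lemma ent_Mb_mul (hMb : ∀ j k : ℤ, ent Mb j k = if j = k then (b j : ℂ) else 0)
    (X : H2 →L[ℂ] H2) (j k : ℤ) : ent (Mb * X) j k = (b j : ℂ) * ent X j k := by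
  rw [ent, ContinuousLinearMap.mul_apply, ← adjoint_inner_left, A_selfadj hMb, A_delta hMb, inner_smul_left,
    Complex.conj_ofReal]; rfl

lemma ent_mul_J (hS : ∀ j k : ℤ, ent S j k = if k = j + 1 then 1 else 0)
    (hA : ∀ j k : ℤ, ent A j k = if j = k then (a j : ℂ) else 0)
    (hMb : ∀ j k : ℤ, ent Mb j k = if j = k then (b j : ℂ) else 0)
    (hJ : J = A * S + ContinuousLinearMap.adjoint S * A + Mb)
    (X : H2 →L[ℂ] H2) (j k : ℤ) :
    ent (X * J) j k =
      (a (k - 1) : ℂ) * ent X j (k - 1) + (a k : ℂ) * ent X j (k + 1)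
        + (b k : ℂ) * ent X j k := by
  rw [hJ, mul_add, mul_add, ← mul_assoc, ← mul_assoc, ent_add, ent_add,
    ent_mul_S hS, ent_mul_A hA, ent_mul_A hA, ent_mul_Sadj hS, ent_mul_Mb hMb]

lemma ent_J_mul (hS : ∀ j k : ℤ, ent S j k = if k = j + 1 then 1 else 0)
    (hA : ∀ j k : ℤ, ent A j k = if j = k then (a j : ℂ) else 0)
    (hMb : ∀ j k : ℤ, ent Mb j k = if j = k then (b j : ℂ) else 0)
    (hJ : J = A * S + ContinuousLinearMap.adjoint S * A + Mb)
    (X : H2 →L[ℂ] H2) (j k : ℤ) :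
    ent (J * X) j k =
      (a j : ℂ) * ent X (j + 1) k + (a (j - 1) : ℂ) * ent X (j - 1) k
        + (b j : ℂ) * ent X j k := by
  rw [hJ, add_mul, add_mul, mul_assoc, mul_assoc, ent_add, ent_add,
    ent_A_mul hA, ent_S_mul hS, ent_Sadj_mul hS, ent_A_mul hA, ent_Mb_mul hMb]

lemma ent_pow_symm (hS : ∀ j k : ℤ, ent S j k = if k = j + 1 then 1 else 0)
    (hA : ∀ j k : ℤ, ent A j k = if j = k then (a j : ℂ) else 0)
    (hMb : ∀ j k : ℤ, ent Mb j k = if j = k then (b j : ℂ) else 0)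
    (hJ : J = A * S + ContinuousLinearMap.adjoint S * A + Mb) :
    ∀ (n : ℕ) (j k : ℤ), ent (J ^ n) j k = ent (J ^ n) k j := by
  intro n
  induction n with
  | zero =>
    intro j k
    simp only [pow_zero, ent_one]
    by_cases h : j = k
    · subst h; rfl
    · rw [if_neg h, if_neg (fun hh => h hh.symm)]
  | succ n ih =>
    intro j k
    rw [pow_succ, ent_mul_J hS hA hMb hJ,
      show J ^ n * J = J * J ^ n by rw [← pow_succ, pow_succ'],
      ent_J_mul hS hA hMb hJ, ih j (k - 1), ih j (k + 1), ih j k]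
    ring

end ops



/-- For a Jacobi matrix `J = aS + S*a + b` (with `S` the shift and `a`, `b`
multiplication operators), the strictly upper triangular part of `Jⁿ` satisfies
`(Jⁿ)₊ = Σ_{k=0}^{n-1} a ((Jᵏ)_d S - (S Jᵏ)_d) J^{n-k-1}`. -/
theorem stmt10 (a b : ℤ → ℝ) (ha : ∀ n, 0 < a n)
    (S A Mb J : H2 →L[ℂ] H2)
    (hS : ∀ j k : ℤ, ent S j k = if k = j + 1 then 1 else 0)
    (hA : ∀ j k : ℤ, ent A j k = if j = k then (a j : ℂ) else 0)
    (hMb : ∀ j k : ℤ, ent Mb j k = if j = k then (b j : ℂ) else 0)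
    (hJ : J = A * S + ContinuousLinearMap.adjoint S * A + Mb)
    (Up Dd SJd : ℕ → (H2 →L[ℂ] H2))
    (hUp : ∀ (n : ℕ) (j k : ℤ), ent (Up n) j k = if j < k then ent (J ^ n) j k else 0)
    (hDd : ∀ (n : ℕ) (j k : ℤ), ent (Dd n) j k = if j = k then ent (J ^ n) j j else 0)
    (hSJd : ∀ (n : ℕ) (j k : ℤ),
      ent (SJd n) j k = if j = k then ent (S * J ^ n) j j else 0) :
    ∀ n : ℕ, Up n = ∑ k ∈ Finset.range n, A * (Dd k * S - SJd k) * J ^ (n - k - 1) := by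
  have key : ∀ n : ℕ, Up (n + 1) = Up n * J + A * (Dd n * S - SJd n) := by
    intro n
    apply clm_ext
    intro j k
    rw [hUp, pow_succ, ent_mul_J hS hA hMb hJ, ent_add,
      ent_mul_J hS hA hMb hJ (Up n), hUp n j (k - 1), hUp n j (k + 1), hUp n j k,
      ent_A_mul hA, ent_sub, ent_mul_S hS, hDd, hSJd, ent_S_mul hS]
    rcases lt_trichotomy j k with h | h | h
    · by_cases h2 : j = k - 1
      · rw [if_pos h, if_neg (by omega : ¬ j < k - 1), if_pos (by omega : j < k + 1),
          if_pos h, if_pos h2, if_neg (by omega : ¬ j = k), h2]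
        ring
      · rw [if_pos h, if_pos (by omega : j < k - 1), if_pos (by omega : j < k + 1),
          if_pos h, if_neg h2, if_neg (by omega : ¬ j = k)]
        ring
    · rw [if_neg (by omega : ¬ j < k), if_neg (by omega : ¬ j < k - 1),
        if_pos (by omega : j < k + 1), if_neg (by omega : ¬ j < k),
        if_neg (by omega : ¬ j = k - 1), if_pos h, h,
        ent_pow_symm hS hA hMb hJ n k (k + 1)]
      ring
    · rw [if_neg (by omega : ¬ j < k), if_neg (by omega : ¬ j < k - 1),
        if_neg (by omega : ¬ j < k + 1), if_neg (by omega : ¬ j < k),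
        if_neg (by omega : ¬ j = k - 1), if_neg (by omega : ¬ j = k)]
      ring
  intro n
  induction n with
  | zero =>
    rw [Finset.range_zero, Finset.sum_empty]
    apply clm_ext
    intro j k
    rw [hUp, ent_zero, pow_zero, ent_one]
    split_ifs with h1 h2
    · exact absurd h2 (by omega)
    · rfl
    · rfl
  | succ n ih =>
    rw [key n, ih, Finset.sum_range_succ]
    congr 1
    · rw [Finset.sum_mul]
      refine Finset.sum_congr rfl fun k hk => ?_
      have hk' : k < n := Finset.mem_range.mp hk
      rw [show n + 1 - k - 1 = (n - k - 1) + 1 by omega, pow_succ, ← mul_assoc]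
    · rw [show n + 1 - n - 1 = 0 by omega, pow_zero, mul_one]
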